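/- Let K, D, M, α, β, γ, ρ, σ, λ, n₀ be natural numbers and n : Fin λ → ℕ, and define m : ℕ → ℕ by m j = |{i : Fin λ | n i = j}|. Assume: 1 ≤ D; β = D + α; K = β·γ + ρ; λ ≤ γ; σ + n₀ ≤ ρ; for every i, 1 ≤ n i ≤ D; n₀ + Σ_i n i = D; σ + λ·α ≤ M; and D + M ≤ K. Then, as an identity of rational numbers, T₁ · (C(K,D) · C(K−D,M))⁻¹ · P₅ = γ! · ρ! · (β!)^γ / K!, where T₁ = C(ρ,n₀) · C(γ,λ) · (λ! / Π_{j=1}^{D} (m j)!) · Π_i C(β, n i) · C(ρ−n₀, σ) · Π_i C(β − n i, α) · C(K−D−σ−λ·α, M−σ−λ·α), and P₅ = [ (Π_{j=1}^{D} (m j)!) · n₀! · (Π_i (n i)!) · (M−σ−λ·α)! · σ! · (α!)^λ / (D! · M!) ] · [ (γ−λ)! · (ρ−σ−n₀)! · (Π_i (β−α−n i)!) · (β!)^{γ−λ} / (K−D−σ−λ·α)! ]. -/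

import Mathlib

open Finset Nat

/-- The identity `ℙ(Q = Q | N = N) = T₁ · (C(K,D)C(K-D,M))⁻¹ · P₅ = γ!ρ!(β!)^γ / K!`
from the privacy proof of the Generalized Partition and Code protocol. -/
theorem stmt_10 (K D M α β γ ρ σ lam n₀ : ℕ) (n : Fin lam → ℕ)
    (m : ℕ → ℕ)
    (hm : ∀ j, m j = (Finset.univ.filter (fun i : Fin lam => n i = j)).card)
    (hD : 1 ≤ D) (hβ : β = D + α) (hK : K = β * γ + ρ) (hlam : lam ≤ γ)
    (hρ : σ + n₀ ≤ ρ) (hn : ∀ i, 1 ≤ n i ∧ n i ≤ D)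
    (hsum : n₀ + ∑ i, n i = D) (hM : σ + lam * α ≤ M) (hDMK : D + M ≤ K) :
    ((Nat.choose ρ n₀ : ℚ) * (Nat.choose γ lam : ℚ)
        * ((lam.factorial : ℚ) / ∏ j ∈ Finset.Icc 1 D, ((m j).factorial : ℚ))
        * (∏ i : Fin lam, (Nat.choose β (n i) : ℚ))
        * (Nat.choose (ρ - n₀) σ : ℚ)
        * (∏ i : Fin lam, (Nat.choose (β - n i) α : ℚ))
        * (Nat.choose (K - D - σ - lam * α) (M - σ - lam * α) : ℚ))
      * ((Nat.choose K D : ℚ) * (Nat.choose (K - D) M : ℚ))⁻¹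
      * ((((∏ j ∈ Finset.Icc 1 D, ((m j).factorial : ℚ)) * (n₀.factorial : ℚ)
            * (∏ i : Fin lam, ((n i).factorial : ℚ))
            * ((M - σ - lam * α).factorial : ℚ) * (σ.factorial : ℚ)
            * (α.factorial : ℚ) ^ lam)
          / ((D.factorial : ℚ) * (M.factorial : ℚ)))
        * ((((γ - lam).factorial : ℚ) * ((ρ - σ - n₀).factorial : ℚ)
            * (∏ i : Fin lam, ((β - α - n i).factorial : ℚ))
            * (β.factorial : ℚ) ^ (γ - lam))
          / ((K - D - σ - lam * α).factorial : ℚ)))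
      = ((γ.factorial : ℚ) * (ρ.factorial : ℚ) * (β.factorial : ℚ) ^ γ)
          / (K.factorial : ℚ) := by
  -- per-index identity
  have hkey : ∀ i : Fin lam,
      Nat.choose β (n i) * Nat.choose (β - n i) α * (n i).factorial
        * (β - α - n i).factorial * α.factorial = β.factorial := by
    intro i
    have h1 : n i ≤ β := by have := (hn i).2; omega
    have h2 : α ≤ β - n i := by have := (hn i).2; omega
    have e1 := Nat.choose_mul_factorial_mul_factorial h1
    have e2 := Nat.choose_mul_factorial_mul_factorial h2
    have h3 : β - α - n i = β - n i - α := by omega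
    rw [h3, ← e1, ← e2]; ring
  -- combined product identity over ℚ
  have hprod : (∏ i : Fin lam, (Nat.choose β (n i) : ℚ))
      * (∏ i : Fin lam, (Nat.choose (β - n i) α : ℚ))
      * (∏ i : Fin lam, ((n i).factorial : ℚ))
      * (∏ i : Fin lam, ((β - α - n i).factorial : ℚ))
      * ((α.factorial : ℚ)) ^ lam
      = ((β.factorial : ℚ)) ^ lam := by
    have : ((α.factorial : ℚ)) ^ lam = ∏ _i : Fin lam, (α.factorial : ℚ) := by
      simp
    rw [this, ← Finset.prod_mul_distrib, ← Finset.prod_mul_distrib,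
      ← Finset.prod_mul_distrib, ← Finset.prod_mul_distrib]
    have : ((β.factorial : ℚ)) ^ lam = ∏ _i : Fin lam, (β.factorial : ℚ) := by
      simp
    rw [this]
    refine Finset.prod_congr rfl fun i _ => ?_
    exact_mod_cast congrArg (Nat.cast : ℕ → ℚ) (hkey i)
  -- nonzeros
  have hfac : ∀ k : ℕ, ((k.factorial : ℚ)) ≠ 0 := fun k => by
    exact_mod_cast (Nat.factorial_pos k).ne'
  have hmne : (∏ j ∈ Finset.Icc 1 D, ((m j).factorial : ℚ)) ≠ 0 :=
    Finset.prod_ne_zero_iff.2 fun j _ => hfac _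
  have hP2 : (∏ i : Fin lam, (Nat.choose (β - n i) α : ℚ)) ≠ 0 :=
    Finset.prod_ne_zero_iff.2 fun i _ => by
      have : α ≤ β - n i := by have := (hn i).2; omega
      exact_mod_cast (Nat.choose_pos this).ne'
  have hP3 : (∏ i : Fin lam, ((n i).factorial : ℚ)) ≠ 0 :=
    Finset.prod_ne_zero_iff.2 fun i _ => hfac _
  have hP4 : (∏ i : Fin lam, ((β - α - n i).factorial : ℚ)) ≠ 0 :=
    Finset.prod_ne_zero_iff.2 fun i _ => hfac _
  have hA : (∏ i : Fin lam, (Nat.choose β (n i) : ℚ))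
      = ((β.factorial : ℚ)) ^ lam /
        ((∏ i : Fin lam, (Nat.choose (β - n i) α : ℚ))
          * (∏ i : Fin lam, ((n i).factorial : ℚ))
          * (∏ i : Fin lam, ((β - α - n i).factorial : ℚ))
          * ((α.factorial : ℚ)) ^ lam) := by
    rw [eq_div_iff]
    · linarith [hprod]
    · positivity
  -- scalar choose expansions
  have c1 : (Nat.choose ρ n₀ : ℚ) = ρ.factorial / (n₀.factorial * (ρ - n₀).factorial) :=
    Nat.cast_choose ℚ (by omega)
  have c2 : (Nat.choose γ lam : ℚ) = γ.factorial / (lam.factorial * (γ - lam).factorial) :=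
    Nat.cast_choose ℚ hlam
  have c3 : (Nat.choose (ρ - n₀) σ : ℚ)
      = (ρ - n₀).factorial / (σ.factorial * (ρ - σ - n₀).factorial) := by
    rw [Nat.cast_choose ℚ (show σ ≤ ρ - n₀ by omega),
      show ρ - n₀ - σ = ρ - σ - n₀ from by omega]
  have c4 : (Nat.choose (K - D - σ - lam * α) (M - σ - lam * α) : ℚ)
      = (K - D - σ - lam * α).factorial
        / ((M - σ - lam * α).factorial * (K - D - M).factorial) := by
    rw [Nat.cast_choose ℚ (show M - σ - lam * α ≤ K - D - σ - lam * α by omega),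
      show K - D - σ - lam * α - (M - σ - lam * α) = K - D - M from by omega]
  have c5 : (Nat.choose K D : ℚ) = K.factorial / (D.factorial * (K - D).factorial) :=
    Nat.cast_choose ℚ (by omega)
  have c6 : (Nat.choose (K - D) M : ℚ)
      = (K - D).factorial / (M.factorial * (K - D - M).factorial) := by
    rw [Nat.cast_choose ℚ (show M ≤ K - D by omega),
      show K - D - M = K - D - M from rfl]
  have hpow : ((β.factorial : ℚ)) ^ γ = ((β.factorial : ℚ)) ^ (γ - lam) * ((β.factorial : ℚ)) ^ lam := by
    rw [← pow_add]; congr 1; omega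
  rw [hA, c1, c2, c3, c4, c5, c6, hpow]
  field_simp
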